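/- If 0 ≤ x_1 ≤ x_2 ≤ … ≤ x_N < 1, then D_N(x_1,…,x_N) = 1/N + max_{1≤n≤N}(n/N − x_n) − min_{1≤n≤N}(n/N − x_n). -/

import Mathlib

/-- Discrepancy of `x 0, …, x (N-1)` in `[0,1)`. -/
noncomputable def discrepancy {N : ℕ} (x : Fin N → ℝ) : ℝ :=
  sSup {d : ℝ | ∃ a b : ℝ, 0 ≤ a ∧ a < b ∧ b ≤ 1 ∧
    d = |(∑ n, Set.indicator (Set.Ico a b) (fun _ => (1 : ℝ)) (x n)) / N - (b - a)|}

open Finset in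
/-- number of points strictly below `c` -/
noncomputable def cnt {N : ℕ} (x : Fin N → ℝ) (c : ℝ) : ℕ :=
  #(univ.filter (fun n => x n < c))

lemma cnt_le {N : ℕ} (x : Fin N → ℝ) (c : ℝ) : cnt x c ≤ N := by
  classical
  simpa [cnt] using (Finset.card_filter_le Finset.univ (fun n => x n < c)).trans_eq
    (by simp)

lemma cnt_mono {N : ℕ} (x : Fin N → ℝ) {c d : ℝ} (h : c ≤ d) : cnt x c ≤ cnt x d := by
  unfold cnt
  apply Finset.card_le_card
  intro n hn
  simp only [Finset.mem_filter, Finset.mem_univ, true_and] at *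
  linarith

lemma cnt_iff {N : ℕ} {x : Fin N → ℝ} (hm : Monotone x) (c : ℝ) (n : Fin N) :
    x n < c ↔ (n : ℕ) < cnt x c := by
  unfold cnt
  constructor
  · intro h
    have hsub : Finset.Iic n ⊆ Finset.univ.filter (fun m => x m < c) := by
      intro m hm'
      simp only [Finset.mem_Iic] at hm'
      simp only [Finset.mem_filter, Finset.mem_univ, true_and]
      exact lt_of_le_of_lt (hm hm') h
    have := Finset.card_le_card hsub
    rwa [Fin.card_Iic] at this
  · intro h
    by_contra hc
    push_neg at hc
    have hsub : Finset.univ.filter (fun m => x m < c) ⊆ Finset.Iio n := by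
      intro m hm'
      simp only [Finset.mem_filter, Finset.mem_univ, true_and] at hm'
      simp only [Finset.mem_Iio]
      by_contra hmn
      push_neg at hmn
      exact absurd (lt_of_le_of_lt (le_trans hc (hm hmn)) hm') (lt_irrefl _)
    have := Finset.card_le_card hsub
    rw [Fin.card_Iio] at this
    omega

lemma sum_indicator_eq {N : ℕ} {x : Fin N → ℝ} (hm : Monotone x) {a b : ℝ} (hab : a ≤ b) :
    (∑ n, Set.indicator (Set.Ico a b) (fun _ => (1 : ℝ)) (x n))
      = ((cnt x b : ℝ) - (cnt x a : ℝ)) := by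
  classical
  have h1 : ∀ n : Fin N, Set.indicator (Set.Ico a b) (fun _ => (1 : ℝ)) (x n)
      = if (cnt x a ≤ (n : ℕ) ∧ (n : ℕ) < cnt x b) then 1 else 0 := by
    intro n
    rw [Set.indicator_apply]
    congr 1
    simp only [Set.mem_Ico, eq_iff_iff]
    rw [← cnt_iff hm b n, ← not_lt (a := x n) (b := a), cnt_iff hm a n, not_lt]
  rw [Finset.sum_congr rfl (fun n _ => h1 n)]
  rw [Fin.sum_univ_eq_sum_range (fun i => if (cnt x a ≤ i ∧ i < cnt x b) then (1:ℝ) else 0)]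
  rw [← Finset.sum_filter]
  have hfil : (Finset.range N).filter (fun i => cnt x a ≤ i ∧ i < cnt x b)
      = Finset.Ico (cnt x a) (cnt x b) := by
    ext i
    simp only [Finset.mem_filter, Finset.mem_range, Finset.mem_Ico]
    have := cnt_le x b
    omega
  rw [hfil]
  simp only [Finset.sum_const, Nat.card_Ico, nsmul_eq_mul, mul_one]
  have := cnt_mono x hab
  push_cast [Nat.cast_sub this]
  ring
theorem stmt2 {N : ℕ} (hN : 0 < N) (x : Fin N → ℝ)
    (hmono : Monotone x) (h0 : ∀ n, 0 ≤ x n) (h1 : ∀ n, x n < 1) :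
    discrepancy x =
      1 / (N : ℝ) + (⨆ n : Fin N, (((n : ℕ) : ℝ) + 1) / N - x n)
        - (⨅ n : Fin N, (((n : ℕ) : ℝ) + 1) / N - x n) := by
  classical
  haveI : Nonempty (Fin N) := Fin.pos_iff_nonempty.mp hN
  have hNR : (0:ℝ) < N := Nat.cast_pos.mpr hN
  set f : Fin N → ℝ := fun n => (((n : ℕ) : ℝ) + 1) / N - x n with hfdef
  obtain ⟨i, hi⟩ := Finite.exists_max f
  obtain ⟨j, hj⟩ := Finite.exists_min f
  have hsup : (⨆ n, f n) = f i :=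
    le_antisymm (ciSup_le hi) (le_ciSup (Set.Finite.bddAbove (Set.finite_range f)) i)
  have hinf : (⨅ n, f n) = f j :=
    le_antisymm (ciInf_le (Set.Finite.bddBelow (Set.finite_range f)) j) (le_ciInf hj)
  clear_value f
  rw [hsup, hinf]
  -- basic facts about f i and f j
  have hji : f j ≤ f i := le_trans (hj i) (le_refl _)
  have hfi_pos : 0 < f i := by
    have hL := hi ⟨N - 1, by omega⟩
    have hc : ((((⟨N - 1, by omega⟩ : Fin N) : ℕ) : ℝ) + 1) = N := by
      simp only [Fin.val_mk]
      rw [Nat.cast_sub hN]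
      ring
    have := h1 ⟨N - 1, by omega⟩
    simp only [hfdef, hc] at hL ⊢
    rw [div_self (ne_of_gt hNR)] at hL
    linarith [hL, this]
  have hfj_le : f j ≤ 1 / N := by
    have h0' := h0 ⟨0, hN⟩
    have h2 := hj ⟨0, hN⟩
    have hE : f ⟨0, hN⟩ = 1 / N - x ⟨0, hN⟩ := by
      simp only [hfdef, Fin.val_mk, Nat.cast_zero, zero_add]
    rw [hE] at h2
    linarith
  have hT_pos : 0 < 1 / (N:ℝ) + f i - f j := by
    have : 0 < 1 / (N:ℝ) := by positivity
    linarith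
  -- the set
  unfold discrepancy
  have hne : Set.Nonempty {d : ℝ | ∃ a b : ℝ, 0 ≤ a ∧ a < b ∧ b ≤ 1 ∧
      d = |(∑ n, Set.indicator (Set.Ico a b) (fun _ => (1 : ℝ)) (x n)) / N - (b - a)|} :=
    ⟨_, 0, 1, le_refl _, one_pos, le_refl _, rfl⟩
  have hub : ∀ d ∈ {d : ℝ | ∃ a b : ℝ, 0 ≤ a ∧ a < b ∧ b ≤ 1 ∧
      d = |(∑ n, Set.indicator (Set.Ico a b) (fun _ => (1 : ℝ)) (x n)) / N - (b - a)|},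
      d ≤ 1 / N + f i - f j := by
    rintro d ⟨a, b, ha, hab, hb, rfl⟩
    rw [sum_indicator_eq hmono hab.le]
    set ta := cnt x a with hta
    set tb := cnt x b with htb
    have htab : ta ≤ tb := cnt_mono x hab.le
    have htbN : tb ≤ N := cnt_le x b
    clear_value ta tb
    rw [abs_sub_le_iff]
    constructor
    · -- count side ≤ T
      rcases eq_or_lt_of_le htab with heq | hlt
      · rw [heq]
        have : ((tb:ℝ) - tb) / N = 0 := by ring
        rw [this]
        linarith
      · set n1 : Fin N := ⟨tb - 1, by omega⟩ with hn1
        set n0 : Fin N := ⟨ta, by omega⟩ with hn0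
        have hn1v : (n1 : ℕ) = tb - 1 := by rw [hn1]
        have hn0v : (n0 : ℕ) = ta := by rw [hn0]
        clear_value n1 n0
        have hb1 : x n1 < b := by
          rw [cnt_iff hmono b n1, ← htb, hn1v]
          omega
        have ha0 : a ≤ x n0 := by
          rw [← not_lt]
          rw [cnt_iff hmono a n0, ← hta, hn0v]
          omega
        have hE1 : f n1 = (tb:ℝ) / N - x n1 := by
          simp only [hfdef, hn1v]
          rw [Nat.cast_sub (by omega : 1 ≤ tb)]
          ring_nf
        have hE0 : f n0 = ((ta:ℝ) + 1) / N - x n0 := by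
          simp only [hfdef, hn0v]
        have h1' : f n1 ≤ f i := hi n1
        have h0' : f j ≤ f n0 := hj n0
        have hkey : ((tb:ℝ) - ta) / N = (tb:ℝ)/N - ((ta:ℝ)+1)/N + 1/N := by ring
        rw [hkey]
        linarith
    · -- length side ≤ T
      rcases lt_or_eq_of_le htbN with htbN' | htbN'
      · -- tb < N : b ≤ x ⟨tb⟩
        set nb : Fin N := ⟨tb, htbN'⟩ with hnb
        have hnbv : (nb : ℕ) = tb := by rw [hnb]
        clear_value nb
        have hbx : b ≤ x nb := by
          rw [← not_lt, cnt_iff hmono b nb, ← htb, hnbv]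
          omega
        have hEb : f nb = ((tb:ℝ) + 1) / N - x nb := by
          simp only [hfdef, hnbv]
        have hbi : f nb ≤ f i := hi nb
        rcases Nat.eq_zero_or_pos ta with hta0 | hta0
        · -- ta = 0
          rw [hta0]
          have hkey : (b - a) - ((tb:ℝ) - (0:ℕ)) / N
              ≤ (x nb) - ((tb:ℝ)) / N := by
            push_cast
            have : ((tb:ℝ) - 0)/N = (tb:ℝ)/N := by ring
            rw [this]
            linarith
          have hkey2 : (x nb) - (tb:ℝ)/N = 1/N - f nb := by rw [hEb]; ring
          push_cast at hkey ⊢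
          linarith [hj nb]
        · -- ta > 0
          set na : Fin N := ⟨ta - 1, by omega⟩ with hna
          have hnav : (na : ℕ) = ta - 1 := by rw [hna]
          clear_value na
          have hax : x na < a := by
            rw [cnt_iff hmono a na, ← hta, hnav]
            omega
          have hEa : f na = (ta:ℝ) / N - x na := by
            simp only [hfdef, hnav]
            rw [Nat.cast_sub (by omega : 1 ≤ ta)]
            ring_nf
          have hai : f na ≤ f i := hi na
          have hjb : f j ≤ f nb := hj nb
          have hkey : ((tb:ℝ) - ta) / N = ((tb:ℝ)+1)/N - (ta:ℝ)/N - 1/N := by ring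
          rw [hkey]
          linarith
      · -- tb = N : b ≤ 1
        rcases Nat.eq_zero_or_pos ta with hta0 | hta0
        · rw [hta0, htbN']
          have : ((N:ℝ) - (0:ℕ)) / N = 1 := by
            push_cast
            field_simp
            ring
          rw [this]
          linarith
        · set na : Fin N := ⟨ta - 1, by omega⟩ with hna
          have hnav : (na : ℕ) = ta - 1 := by rw [hna]
          clear_value na
          have hax : x na < a := by
            rw [cnt_iff hmono a na, ← hta, hnav]
            omega
          have hEa : f na = (ta:ℝ) / N - x na := by
            simp only [hfdef, hnav]
            rw [Nat.cast_sub (by omega : 1 ≤ ta)]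
            ring_nf
          have hai : f na ≤ f i := hi na
          rw [htbN']
          have hkey : ((N:ℝ) - ta) / N = 1 - (ta:ℝ)/N := by field_simp
          rw [hkey]
          linarith
  apply le_antisymm (csSup_le hne hub)
  -- lower bound
  have hbdd : BddAbove {d : ℝ | ∃ a b : ℝ, 0 ≤ a ∧ a < b ∧ b ≤ 1 ∧
      d = |(∑ n, Set.indicator (Set.Ico a b) (fun _ => (1 : ℝ)) (x n)) / N - (b - a)|} :=
    ⟨_, hub⟩
  apply le_of_forall_pos_le_add
  intro ε hε
  rcases le_or_gt j i with hji' | hij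
  · -- j ≤ i : positive interval [x j, x i + δ)
    set δ := min ε (1 - x i) with hδdef
    have hδ : 0 < δ := lt_min hε (by linarith [h1 i])
    have hδε : δ ≤ ε := min_le_left _ _
    have hδ1 : x i + δ ≤ 1 := by
      have := min_le_right ε (1 - x i)
      linarith
    set a := x j with hadef
    set b := x i + δ with hbdef
    have hab : a < b := by
      have := hmono hji'
      simp only [hadef, hbdef]
      linarith
    have ha' : 0 ≤ a := hadef ▸ h0 j
    have hxia : x i < b := by rw [hbdef]; linarith
    have haxj : a = x j := hadef
    have hb' : b ≤ 1 := hbdef ▸ hδ1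
    clear_value δ a b
    have hmem : |(∑ n, Set.indicator (Set.Ico a b) (fun _ => (1 : ℝ)) (x n)) / N - (b - a)|
        ∈ {d : ℝ | ∃ a b : ℝ, 0 ≤ a ∧ a < b ∧ b ≤ 1 ∧
        d = |(∑ n, Set.indicator (Set.Ico a b) (fun _ => (1 : ℝ)) (x n)) / N - (b - a)|} :=
      ⟨a, b, ha', hab, hb', rfl⟩
    have hd := le_csSup hbdd hmem
    rw [sum_indicator_eq hmono hab.le] at hd
    have htaj : cnt x a ≤ (j:ℕ) := by
      rw [← not_lt, ← cnt_iff hmono a j]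
      simp [hadef]
    have htbi : (i:ℕ) + 1 ≤ cnt x b := by
      have : x i < b := hxia
      have := (cnt_iff hmono b i).mp this
      omega
    have hcast : ((i:ℝ) + 1 - (j:ℝ)) / N ≤ ((cnt x b : ℝ) - (cnt x a : ℝ)) / N := by
      have hc1 : ((i:ℝ) + 1) ≤ (cnt x b : ℝ) := by exact_mod_cast htbi
      have hc2 : ((cnt x a : ℝ)) ≤ (j:ℝ) := by exact_mod_cast htaj
      have hnum : ((i:ℝ) + 1 - (j:ℝ)) ≤ ((cnt x b : ℝ) - (cnt x a : ℝ)) := by linarith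
      exact div_le_div_of_nonneg_right hnum hNR.le
    have hkey : ((i:ℝ) + 1 - (j:ℝ)) / N - (b - a) = (1/N + f i - f j) - δ := by
      simp only [hfdef, hadef, hbdef]
      ring
    have habs : ((cnt x b : ℝ) - (cnt x a : ℝ)) / N - (b - a)
        ≤ |((cnt x b : ℝ) - (cnt x a : ℝ)) / N - (b - a)| := le_abs_self _
    linarith
  · -- i < j : negative interval [x i + δ, x j)
    have hxij : x i < x j := by
      rcases lt_or_ge (x i) (x j) with h | h
      · exact h
      · exfalso
        have hxe : x i = x j := le_antisymm (hmono hij.le) h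
        have hji2 := hj i
        have hlt : ((i:ℝ) + 1) / N < ((j:ℝ) + 1) / N := by
          gcongr
          exact_mod_cast hij
        simp only [hfdef, hxe] at hji2
        linarith
    set δ := min ε (x j - x i) / 2 with hδdef
    have hδ : 0 < δ := by
      have : 0 < min ε (x j - x i) := lt_min hε (by linarith)
      simp only [hδdef]
      linarith
    have hδε : δ ≤ ε := by
      have := min_le_left ε (x j - x i)
      simp only [hδdef]
      linarith [hδ]
    have hδx : δ < x j - x i := by
      have h2 := min_le_right ε (x j - x i)
      have : 0 < min ε (x j - x i) := lt_min hε (by linarith)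
      simp only [hδdef]
      linarith
    set a := x i + δ with hadef
    set b := x j with hbdef
    have ha : 0 ≤ a := by
      have := h0 i
      simp only [hadef]; linarith
    have hab : a < b := by simp only [hadef, hbdef]; linarith
    have hb : b ≤ 1 := by rw [hbdef]; exact (h1 j).le
    have hxia2 : x i < a := by rw [hadef]; linarith
    have hbxj : b = x j := hbdef
    clear_value δ a b
    have hmem : |(∑ n, Set.indicator (Set.Ico a b) (fun _ => (1 : ℝ)) (x n)) / N - (b - a)|
        ∈ {d : ℝ | ∃ a b : ℝ, 0 ≤ a ∧ a < b ∧ b ≤ 1 ∧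
        d = |(∑ n, Set.indicator (Set.Ico a b) (fun _ => (1 : ℝ)) (x n)) / N - (b - a)|} :=
      ⟨a, b, ha, hab, hb, rfl⟩
    have hd := le_csSup hbdd hmem
    rw [sum_indicator_eq hmono hab.le] at hd
    have htai : (i:ℕ) + 1 ≤ cnt x a := by
      have : x i < a := hxia2
      have := (cnt_iff hmono a i).mp this
      omega
    have htbj : cnt x b ≤ (j:ℕ) := by
      rw [← not_lt, ← cnt_iff hmono b j]
      simp [hbdef]
    have hcast : ((cnt x b : ℝ) - (cnt x a : ℝ)) / N ≤ ((j:ℝ) - ((i:ℝ) + 1)) / N := by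
      have hc1 : ((cnt x b : ℝ)) ≤ (j:ℝ) := by exact_mod_cast htbj
      have hc2 : ((i:ℝ) + 1) ≤ (cnt x a : ℝ) := by exact_mod_cast htai
      have hnum : ((cnt x b : ℝ) - (cnt x a : ℝ)) ≤ ((j:ℝ) - ((i:ℝ) + 1)) := by linarith
      exact div_le_div_of_nonneg_right hnum hNR.le
    have hkey : (b - a) - ((j:ℝ) - ((i:ℝ) + 1)) / N = (1/N + f i - f j) - δ := by
      simp only [hfdef, hadef, hbdef]
      ring
    have habs : -(((cnt x b : ℝ) - (cnt x a : ℝ)) / N - (b - a))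
        ≤ |((cnt x b : ℝ) - (cnt x a : ℝ)) / N - (b - a)| := neg_le_abs _
    linarith
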